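/- For every real x and every h ∈ ℝⁿ, the vector ξ = S·Z(x)·g + Z(x)·h lies in the range of Z(x). -/

import Mathlib

open Matrix

lemma negone_zpow_congr {a b : ℤ} (h : a % 2 = b % 2) : (-1:ℝ)^a = (-1:ℝ)^b := by
  have he : Even (a - b) := by rw [Int.even_iff]; omega
  have : (-1:ℝ)^a = (-1:ℝ)^(b + (a-b)) := by ring_nf
  rw [this, zpow_add₀ (by norm_num : (-1:ℝ) ≠ 0), he.neg_one_zpow, mul_one]

noncomputable def zent (x : ℝ) (i j : ℕ) : ℝ :=
  if (i + j) % 2 = 1 then 0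
  else (-1 : ℝ) ^ (((i : ℤ) - (j : ℤ)) / 2) * x ^ ((i + j) / 2)

lemma zent_ee (x : ℝ) (a b : ℕ) :
    zent x (2*a) (2*b) = (-1:ℝ)^((a:ℤ)-b) * x^(a+b) := by
  rw [zent, if_neg (by omega),
    show ((2*a:ℕ):ℤ) - (2*b:ℕ) = 2*((a:ℤ)-b) by push_cast; ring,
    Int.mul_ediv_cancel_left _ (by norm_num), show (2*a+2*b)/2 = a + b by omega]

lemma zent_oo (x : ℝ) (a b : ℕ) :
    zent x (2*a+1) (2*b+1) = (-1:ℝ)^((a:ℤ)-b) * x^(a+b+1) := by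
  rw [zent, if_neg (by omega),
    show ((2*a+1:ℕ):ℤ) - (2*b+1:ℕ) = 2*((a:ℤ)-b) by push_cast; ring,
    Int.mul_ediv_cancel_left _ (by norm_num),
    show (2*a+1+(2*b+1))/2 = a + b + 1 by omega]

lemma zent_eo (x : ℝ) (a b : ℕ) : zent x (2*a) (2*b+1) = 0 := by
  rw [zent, if_pos (by omega)]

lemma zent_oe (x : ℝ) (a b : ℕ) : zent x (2*a+1) (2*b) = 0 := by
  rw [zent, if_pos (by omega)]

lemma zent_e0 (x : ℝ) (a : ℕ) : zent x (2*a) 0 = (-1:ℝ)^(a:ℤ) * x^a := by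
  simpa using zent_ee x a 0
lemma zent_o1 (x : ℝ) (a : ℕ) : zent x (2*a+1) 1 = (-1:ℝ)^(a:ℤ) * x^(a+1) := by
  simpa using zent_oo x a 0
lemma zent_o0 (x : ℝ) (a : ℕ) : zent x (2*a+1) 0 = 0 := by
  simpa using zent_oe x a 0
lemma zent_e1 (x : ℝ) (a : ℕ) : zent x (2*a) 1 = 0 := by
  simpa using zent_eo x a 0

lemma comb (x : ℝ) (a b : ℤ) (p q : ℕ) :
    ((-1:ℝ)^a * x^p) * ((-1:ℝ)^b * x^q) = (-1:ℝ)^(a+b) * x^(p+q) := by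
  rw [zpow_add₀ (by norm_num : (-1:ℝ) ≠ 0), pow_add]; ring

lemma neg_comb (x : ℝ) (a : ℤ) (p : ℕ) :
    -((-1:ℝ)^a * x^p) = (-1:ℝ)^(a+1) * x^p := by
  rw [zpow_add₀ (by norm_num : (-1:ℝ) ≠ 0)]; ring

lemma fini (x : ℝ) (a b : ℤ) (hab : a % 2 = b % 2) (p q : ℕ) (hpq : p = q) :
    (-1:ℝ)^a * x^p = (-1:ℝ)^b * x^q := by
  rw [negone_zpow_congr hab, hpq]

lemma key (x : ℝ) (n i : ℕ) (hn : 2 ≤ n) (hi : i < n) :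
    zent x i 0 * zent x (n-1) 1 - zent x i 1 * zent x (n-1) 0
      = if i + 1 < n then zent x (i+1) (n-1) else 0 := by
  rcases Nat.even_or_odd n with hne | hno
  · rw [Nat.even_iff] at hne
    obtain ⟨l, rfl⟩ : ∃ l, n = 2*l+2 := ⟨(n-2)/2, by omega⟩
    have hm : 2*l+2-1 = 2*l+1 := by omega
    rcases Nat.even_or_odd i with hie | hio
    · rw [Nat.even_iff] at hie
      obtain ⟨k, rfl⟩ : ∃ k, i = 2*k := ⟨i/2, by omega⟩
      rw [hm, if_pos (by omega), zent_e0, zent_o1, zent_e1, zent_oo, comb]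
      simp only [zero_mul, mul_zero, sub_zero]
      exact fini x _ _ (by omega) _ _ (by omega)
    · rw [Nat.odd_iff] at hio
      obtain ⟨k, rfl⟩ : ∃ k, i = 2*k+1 := ⟨i/2, by omega⟩
      rw [hm, zent_o0, zent_o0, zero_mul, mul_zero, sub_zero]
      split
      · rw [show 2*k+1+1 = 2*(k+1) by ring, zent_eo]
      · rfl
  · rw [Nat.odd_iff] at hno
    obtain ⟨l, rfl⟩ : ∃ l, n = 2*l+1 := ⟨n/2, by omega⟩
    have hm : 2*l+1-1 = 2*l := by omega
    rcases Nat.even_or_odd i with hie | hio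
    · rw [Nat.even_iff] at hie
      obtain ⟨k, rfl⟩ : ∃ k, i = 2*k := ⟨i/2, by omega⟩
      rw [hm, zent_e1, zent_e1, zero_mul, mul_zero, sub_zero]
      split
      · rw [zent_oe]
      · rfl
    · rw [Nat.odd_iff] at hio
      obtain ⟨k, rfl⟩ : ∃ k, i = 2*k+1 := ⟨i/2, by omega⟩
      rw [hm, if_pos (by omega), zent_o0, zent_o1, zent_e0,
        show 2*k+1+1 = 2*(k+1) by ring, zent_ee, comb, zero_mul, zero_sub, neg_comb]
      exact fini x _ _ (by omega) _ _ (by omega)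

/-- The `n × n` shift matrix `S` with `S_{i,i+1} = 1` and all other entries `0`. -/
def Smat (n : ℕ) : Matrix (Fin n) (Fin n) ℝ :=
  Matrix.of fun i j => if (i : ℕ) + 1 = (j : ℕ) then 1 else 0

/-- The last standard basis vector `g` of `ℝⁿ`. -/
def gvec (n : ℕ) : Fin n → ℝ := fun i => if (i : ℕ) = n - 1 then 1 else 0

/-- The signed Hankel rank-two matrix `Z(x)`: in 0-based indexing, the `(i,j)` entry is `0`
if `i+j` is odd and `(−1)^{(i−j)/2} x^{(i+j)/2}` if `i+j` is even. -/
noncomputable def Zxmat (n : ℕ) (x : ℝ) : Matrix (Fin n) (Fin n) ℝ :=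
  Matrix.of fun i j =>
    if ((i : ℕ) + (j : ℕ)) % 2 = 1 then 0
    else (-1 : ℝ) ^ (((i : ℤ) - (j : ℤ)) / 2) * x ^ (((i : ℕ) + (j : ℕ)) / 2)

lemma Zxmat_eq_zent (n : ℕ) (x : ℝ) (i j : Fin n) : Zxmat n x i j = zent x i j := rfl

lemma SZ_apply (n : ℕ) (hn : 2 ≤ n) (x : ℝ) (i : Fin n) :
    (Smat n * Zxmat n x) i ⟨n-1, by omega⟩
      = if h2 : (i:ℕ)+1 < n then Zxmat n x ⟨i+1, h2⟩ ⟨n-1, by omega⟩ else 0 := by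
  rw [Matrix.mul_apply]
  split
  next h2 =>
    rw [Finset.sum_eq_single (⟨(i:ℕ)+1, h2⟩ : Fin n)]
    · simp [Smat]
    · intro b _ hb
      simp only [Smat, of_apply]
      rw [if_neg (by simpa [Fin.ext_iff, eq_comm] using hb), zero_mul]
    · simp
  next h2 =>
    apply Finset.sum_eq_zero
    intro b _
    simp only [Smat, of_apply]
    rw [if_neg (by omega), zero_mul]

/-- For every `x` and `h`, the vector `ξ = S·Z(x)·g + Z(x)·h` lies in the range of `Z(x)`. -/
theorem xi_mem_range_Zx {n : ℕ} (hn : 0 < n) (x : ℝ) (h : Fin n → ℝ) :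
    ∃ y : Fin n → ℝ, (Zxmat n x).mulVec y =
      (Smat n * Zxmat n x).mulVec (gvec n) + (Zxmat n x).mulVec h := by
  by_cases hn2 : 2 ≤ n
  case neg =>
    -- n = 1
    interval_cases n
    refine ⟨h, ?_⟩
    have hS : Smat 1 = 0 := by
      ext i j; fin_cases i <;> fin_cases j <;> simp [Smat]
    rw [hS, Matrix.zero_mul, Matrix.zero_mulVec, zero_add]
  case pos =>
    set m : Fin n := ⟨n-1, by omega⟩ with hm
    set o : Fin n := ⟨0, by omega⟩ with ho
    set e1 : Fin n := ⟨1, by omega⟩ with he1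
    refine ⟨Pi.single o (Zxmat n x m e1) + Pi.single e1 (-(Zxmat n x m o)) + h, ?_⟩
    have hg : gvec n = Pi.single m 1 := by
      ext i; simp [gvec, Pi.single_apply, Fin.ext_iff, eq_comm, hm]
    rw [hg, Matrix.mulVec_add, Matrix.mulVec_add, Matrix.mulVec_single,
      Matrix.mulVec_single, Matrix.mulVec_single]
    funext i
    simp only [Pi.add_apply, Pi.smul_apply, Matrix.col_apply, op_smul_eq_mul, mul_one]
    rw [SZ_apply n hn2 x i]
    have hkey := key x n i hn2 i.isLt
    rw [Zxmat_eq_zent, Zxmat_eq_zent, Zxmat_eq_zent, Zxmat_eq_zent]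
    show zent x i 0 * zent x (n-1) 1 + zent x i 1 * -(zent x (n-1) 0) + _ = _
    rw [mul_neg, ← sub_eq_add_neg, hkey]
    congr 1
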